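/- For every monic irreducible polynomial $\pi \in A$ and every integer $n \geq 1$, the polynomial $\rho_{\pi^{n-1}}(X)$ divides $\rho_{\pi^{n}}(X)$ in $A[X]$, and the quotient $\rho_{\pi^{n}}(X)/\rho_{\pi^{n-1}}(X)$ is a monic Eisenstein polynomial at the prime ideal $(\pi)$: all of its non-leading coefficients are divisible by $\pi$, and its constant term is not divisible by $\pi^2$. -/

import Mathlib

open Polynomial Finset
set_option linter.unusedSectionVars false

section Aux
variable {Fq : Type} [Field Fq] [Fintype Fq]
    (ρ : Polynomial Fq → Polynomial (Polynomial Fq))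
    (hρC : ∀ c : Fq, ρ (C c) = C (C c) * X)
    (hρT : ρ X = C X * X + X ^ Fintype.card Fq)
    (hρadd : ∀ a b : Polynomial Fq, ρ (a + b) = ρ a + ρ b)
    (hρmul : ∀ a b : Polynomial Fq, ρ (a * b) = (ρ a).comp (ρ b))

include hρC hρT hρadd hρmul

theorem rho_one : ρ 1 = X := by
  have := hρC 1
  simpa using this

theorem rho_coeff_zero (a : Polynomial Fq) : (ρ a).coeff 0 = 0 := by
  have key : ∀ a : Polynomial Fq, (ρ a).eval 0 = 0 := by
    intro a
    induction a using Polynomial.induction_on with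
    | C c => simp [hρC]
    | add p q hp hq => simp [hρadd, hp, hq]
    | monomial m c hp =>
        have : (C c * X ^ (m + 1) : Polynomial Fq) = C c * X ^ m * X := by ring
        rw [this, hρmul, eval_comp, hρT]
        simp only [eval_add, eval_mul, eval_pow, eval_X, eval_C]
        rw [zero_pow (by positivity), mul_zero, add_zero]
        exact hp
  rw [coeff_zero_eq_eval_zero]; exact key a

theorem rho_derivative (a : Polynomial Fq) : derivative (ρ a) = C a := by
  induction a using Polynomial.induction_on with
  | C c => simp [hρC]
  | add p q hp hq => simp [hρadd, hp, hq]
  | monomial m c hp =>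
      have h1 : (C c * X ^ (m + 1) : Polynomial Fq) = C c * X ^ m * X := by ring
      rw [h1, hρmul, derivative_comp, hρT, hp]
      have hq1 : ((Fintype.card Fq : Polynomial Fq)) = 0 := by
        obtain ⟨p, hp'⟩ := CharP.exists Fq
        haveI := hp'
        have hprime : p.Prime := CharP.char_is_prime Fq p
        obtain ⟨n, hn⟩ := FiniteField.card Fq p
        haveI : CharP (Polynomial Fq) p := inferInstance
        rw [hn.2, Nat.cast_pow]
        haveI := Fact.mk hprime
        rw [CharP.cast_eq_zero (Polynomial Fq) p]
        exact zero_pow (by positivity)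
      rw [derivative_add, derivative_mul, derivative_C, derivative_X, derivative_X_pow, hq1]
      simp only [map_zero, zero_mul, mul_one, zero_add, add_zero, C_comp]
      rw [← C_mul]
      congr 1
      ring

theorem rho_coeff_one (a : Polynomial Fq) : (ρ a).coeff 1 = a := by
  have h := rho_derivative ρ hρC hρT hρadd hρmul a
  have h0 := congrArg (fun p => Polynomial.coeff p 0) h
  simpa [coeff_derivative] using h0

theorem rho_zero : ρ 0 = 0 := by
  have := hρC 0
  simpa using this

omit hρC hρT hρadd hρmul

theorem char_pack : ∃ p e : ℕ, p.Prime ∧ 0 < e ∧ Fintype.card Fq = p ^ e ∧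
    CharP (Polynomial Fq) p ∧ CharP (Polynomial (Polynomial Fq)) p ∧ CharP Fq p := by
  obtain ⟨p, hp'⟩ := CharP.exists Fq
  haveI := hp'
  have hprime : p.Prime := CharP.char_is_prime Fq p
  obtain ⟨n, hn⟩ := FiniteField.card Fq p
  exact ⟨p, n, hprime, n.2, hn.2, inferInstance, inferInstance, inferInstance⟩

theorem add_pow_card_pow (x y : Polynomial (Polynomial Fq)) (i : ℕ) :
    (x + y) ^ Fintype.card Fq ^ i = x ^ Fintype.card Fq ^ i + y ^ Fintype.card Fq ^ i := by
  obtain ⟨p, e, hp, he, hq, _, hc⟩ := char_pack (Fq := Fq)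
  haveI := hc
  haveI := Fact.mk hp
  rw [hq, ← pow_mul]
  exact add_pow_char_pow (R := Polynomial (Polynomial Fq)) (p := p) (n := e * i) (x := x) (y := y)

theorem sum_pow_card {ι : Type*} (s : Finset ι) (f : ι → Polynomial Fq) :
    (∑ i ∈ s, f i) ^ Fintype.card Fq = ∑ i ∈ s, f i ^ Fintype.card Fq := by
  obtain ⟨p, e, hp, he, hq, hc, _, _⟩ := char_pack (Fq := Fq)
  haveI := hc
  haveI := Fact.mk hp
  rw [hq]
  exact sum_pow_char_pow (R := Polynomial Fq) (p := p) (n := e) s f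

theorem q_pos : 0 < Fintype.card Fq := Fintype.card_pos
theorem one_lt_q : 1 < Fintype.card Fq := Fintype.one_lt_card

include hρC hρT hρadd hρmul

theorem rho_support (a : Polynomial Fq) (j : ℕ) (h : (ρ a).coeff j ≠ 0) :
    ∃ i, j = Fintype.card Fq ^ i := by
  induction a using Polynomial.induction_on generalizing j with
  | C c =>
      rw [hρC] at h
      by_cases h1 : j = 1
      · exact ⟨0, by simp [h1]⟩
      · exfalso; apply h; simp only [coeff_C_mul, coeff_X]
        rw [if_neg (fun hh => h1 hh.symm), mul_zero]
  | add p q hp hq =>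
      rw [hρadd, coeff_add] at h
      rcases (by by_contra hc; push_neg at hc; simp [hc.1, hc.2] at h :
        (ρ p).coeff j ≠ 0 ∨ (ρ q).coeff j ≠ 0) with h' | h'
      · exact hp j h'
      · exact hq j h'
  | monomial m c hp =>
      have h1 : (C c * X ^ (m + 1) : Polynomial Fq) = C c * X ^ m * X := by ring
      rw [h1, hρmul, comp_eq_sum_left, Polynomial.sum_def, finset_sum_coeff] at h
      obtain ⟨e, he, hne⟩ := Finset.exists_ne_zero_of_sum_ne_zero h
      have hce : (ρ (C c * X ^ m)).coeff e ≠ 0 := mem_support_iff.mp he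
      obtain ⟨i, rfl⟩ := hp e hce
      rw [hρT, add_pow_card_pow] at hne
      have hXq : ((X : Polynomial (Polynomial Fq)) ^ Fintype.card Fq) ^ Fintype.card Fq ^ i
          = X ^ Fintype.card Fq ^ (i + 1) := by
        rw [← pow_mul, pow_succ, mul_comm (Fintype.card Fq ^ i)]
      have hCX : ((C (X : Polynomial Fq) * X : Polynomial (Polynomial Fq))) ^ Fintype.card Fq ^ i
          = C (X ^ Fintype.card Fq ^ i) * X ^ Fintype.card Fq ^ i := by
        rw [mul_pow, ← C_pow]
      rw [hXq, hCX, mul_add, coeff_add] at hne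
      simp only [coeff_C_mul, coeff_X_pow] at hne
      by_cases e1 : j = Fintype.card Fq ^ i
      · exact ⟨i, e1⟩
      by_cases e2 : j = Fintype.card Fq ^ (i + 1)
      · exact ⟨i + 1, e2⟩
      exfalso; apply hne
      simp [e1, e2]

theorem rho_X_monic : (ρ X).Monic ∧ (ρ X).natDegree = Fintype.card Fq := by
  rw [hρT, add_comm]
  have hdeg : (C (X : Polynomial Fq) * X : Polynomial (Polynomial Fq)).degree
      < ((Fintype.card Fq : ℕ) : WithBot ℕ) := by
    apply lt_of_le_of_lt (degree_C_mul_X_le _)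
    exact_mod_cast Nat.one_lt_cast.mpr (one_lt_q (Fq := Fq))
  constructor
  · exact monic_X_pow_add hdeg
  · rw [natDegree_add_eq_left_of_degree_lt]
    · exact natDegree_X_pow _
    · rw [degree_X_pow]; exact hdeg

theorem rho_X_pow_monic (k : ℕ) :
    (ρ (X ^ k)).Monic ∧ (ρ (X ^ k)).natDegree = Fintype.card Fq ^ k := by
  induction k with
  | zero =>
      simp only [pow_zero]
      rw [rho_one ρ hρC hρT hρadd hρmul]
      exact ⟨monic_X, natDegree_X⟩
  | succ k ih =>
      rw [pow_succ, hρmul]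
      obtain ⟨hm, hd⟩ := ih
      obtain ⟨hmX, hdX⟩ := rho_X_monic ρ hρC hρT hρadd hρmul
      refine ⟨hm.comp hmX ?_, ?_⟩
      · rw [hdX]; exact (q_pos (Fq := Fq)).ne'
      · rw [natDegree_comp, hd, hdX, pow_succ]

theorem rho_monomial (c : Fq) (k : ℕ) :
    ρ (C c * X ^ k) = C (C c) * ρ (X ^ k) := by
  rw [hρmul, hρC, mul_comp, C_comp, X_comp]

theorem rho_deg_lc (a : Polynomial Fq) (ha : a ≠ 0) :
    (ρ a).natDegree = Fintype.card Fq ^ a.natDegree ∧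
      (ρ a).leadingCoeff = C a.leadingCoeff := by
  have main : ∀ N : ℕ, ∀ a : Polynomial Fq, a ≠ 0 → a.natDegree ≤ N →
      (ρ a).natDegree = Fintype.card Fq ^ a.natDegree ∧
        (ρ a).leadingCoeff = C a.leadingCoeff := by
    intro N
    induction N with
    | zero =>
        intro a ha hN
        obtain ⟨c, rfl⟩ := (natDegree_eq_zero).mp (Nat.le_zero.mp hN)
        have hc : c ≠ 0 := fun h => ha (by simp [h])
        rw [hρC]
        constructor
        · rw [natDegree_C_mul_X _ (by simpa using hc)]
          simp
        · rw [leadingCoeff_mul, leadingCoeff_C, leadingCoeff_X, mul_one, leadingCoeff_C]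
    | succ N ih =>
        intro a ha hN
        rcases Nat.lt_or_ge a.natDegree (N+1) with hlt | hge
        · exact ih a ha (Nat.lt_succ_iff.mp hlt)
        have hdeg : a.natDegree = N + 1 := le_antisymm hN hge
        have hab := eraseLead_add_C_mul_X_pow a
        set b := a.eraseLead with hb
        set M := C a.leadingCoeff * X ^ a.natDegree with hM
        have hmonoH := rho_monomial ρ hρC hρT hρadd hρmul a.leadingCoeff a.natDegree
        obtain ⟨hXm, hXd⟩ := rho_X_pow_monic ρ hρC hρT hρadd hρmul a.natDegree
        have hlc : a.leadingCoeff ≠ 0 := leadingCoeff_ne_zero.mpr ha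
        have hmonoD : (ρ M).natDegree = Fintype.card Fq ^ a.natDegree := by
          rw [hM, hmonoH, natDegree_C_mul (by simpa using hlc), hXd]
        have hmonoL : (ρ M).leadingCoeff = C a.leadingCoeff := by
          rw [hM, hmonoH, leadingCoeff_mul, leadingCoeff_C, hXm.leadingCoeff, mul_one]
        rcases eq_or_ne b 0 with hb0 | hb0
        · have haM : ρ a = ρ M := by
            conv_lhs => rw [← hab, hb0, zero_add]
          rw [haM, hmonoD, hmonoL]
          exact ⟨rfl, rfl⟩
        · have hbd : b.natDegree < a.natDegree := by
            rcases eraseLead_natDegree_lt_or_eraseLead_eq_zero a with h | h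
            · exact h
            · exact absurd h hb0
          obtain ⟨ibD, ibL⟩ := ih b hb0 (by omega)
          have hsum : ρ a = ρ b + ρ M := by
            conv_lhs => rw [← hab]
            rw [hρadd]
          have h1 : (ρ b).natDegree < (ρ M).natDegree := by
            rw [ibD, hmonoD]
            exact Nat.pow_lt_pow_right (one_lt_q (Fq := Fq)) hbd
          constructor
          · rw [hsum, natDegree_add_eq_right_of_natDegree_lt h1, hmonoD]
          · rw [hsum, leadingCoeff_add_of_degree_lt (degree_lt_degree h1), hmonoL]
  exact main a.natDegree a ha le_rfl

theorem rho_monic (a : Polynomial Fq) (ha : a.Monic) : (ρ a).Monic := by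
  have := (rho_deg_lc ρ hρC hρT hρadd hρmul a ha.ne_zero).2
  unfold Polynomial.Monic
  rw [this, ha.leadingCoeff, map_one]

theorem rho_natDegree (a : Polynomial Fq) (ha : a ≠ 0) :
    (ρ a).natDegree = Fintype.card Fq ^ a.natDegree :=
  (rho_deg_lc ρ hρC hρT hρadd hρmul a ha).1

omit hρC hρT hρadd hρmul

theorem qpow_inj : Function.Injective (fun i : ℕ => Fintype.card Fq ^ i) :=
  Nat.pow_right_injective (one_lt_q (Fq := Fq))

theorem coeff_qpow_sumA (b : ℕ → Polynomial Fq) (N i : ℕ) (hiN : i < N) :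
    (∑ j ∈ Finset.range N, C (b j) * X ^ (Fintype.card Fq ^ j)).coeff
      (Fintype.card Fq ^ i) = b i := by
  rw [finset_sum_coeff]
  rw [Finset.sum_eq_single i]
  · simp [coeff_C_mul, coeff_X_pow]
  · intro j hj hne
    rw [coeff_C_mul, coeff_X_pow, if_neg (fun hh => hne ((qpow_inj (Fq := Fq)) hh.symm)),
      mul_zero]
  · intro h
    exact absurd (Finset.mem_range.mpr hiN) h

theorem coeff_qpow_sumB (b : ℕ → Polynomial Fq) (N i : ℕ) (hiN : i < N) :
    (∑ j ∈ Finset.range N, C (b j) * X ^ (Fintype.card Fq ^ (j + 1))).coeff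
      (Fintype.card Fq ^ (i + 1)) = b i := by
  rw [finset_sum_coeff]
  rw [Finset.sum_eq_single i]
  · simp [coeff_C_mul, coeff_X_pow]
  · intro j hj hne
    rw [coeff_C_mul, coeff_X_pow,
      if_neg (fun hh => hne (Nat.succ_injective ((qpow_inj (Fq := Fq)) hh.symm))), mul_zero]
  · intro h
    exact absurd (Finset.mem_range.mpr hiN) h

theorem my_sum_comp {ι : Type*} (s : Finset ι) (f : ι → Polynomial (Polynomial Fq))
    (r : Polynomial (Polynomial Fq)) :
    (∑ i ∈ s, f i).comp r = ∑ i ∈ s, (f i).comp r := by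
  simp only [Polynomial.comp]
  exact eval₂_finset_sum _ s f r

theorem sum_pow_card2 {ι : Type*} (s : Finset ι) (f : ι → Polynomial (Polynomial Fq)) :
    (∑ i ∈ s, f i) ^ Fintype.card Fq = ∑ i ∈ s, f i ^ Fintype.card Fq := by
  obtain ⟨p, e, hp, he, hq, _, hc, _⟩ := char_pack (Fq := Fq)
  haveI := hc
  haveI := Fact.mk hp
  rw [hq]
  exact sum_pow_char_pow (R := Polynomial (Polynomial Fq)) (p := p) (n := e) s f

include hρC hρT hρadd hρmul

theorem rho_rep (a : Polynomial Fq) (ha : a ≠ 0) :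
    ρ a = ∑ i ∈ Finset.range (a.natDegree + 1),
      C ((ρ a).coeff (Fintype.card Fq ^ i)) * X ^ (Fintype.card Fq ^ i) := by
  refine Polynomial.ext fun j => ?_
  by_cases hz : (ρ a).coeff j = 0
  · rw [hz, finset_sum_coeff]
    symm
    apply Finset.sum_eq_zero
    intro i _
    rw [coeff_C_mul, coeff_X_pow]
    by_cases h : j = Fintype.card Fq ^ i
    · rw [if_pos h, mul_one, ← h, hz]
    · rw [if_neg h, mul_zero]
  · obtain ⟨i, rfl⟩ := rho_support ρ hρC hρT hρadd hρmul a j hz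
    have hle : i < a.natDegree + 1 := by
      have h1 : Fintype.card Fq ^ i ≤ (ρ a).natDegree := le_natDegree_of_ne_zero hz
      rw [rho_natDegree ρ hρC hρT hρadd hρmul a ha] at h1
      have := (Nat.pow_le_pow_iff_right (one_lt_q (Fq := Fq))).mp h1
      omega
    rw [coeff_qpow_sumA _ _ _ hle]

theorem rho_rec (a : Polynomial Fq) (ha : a ≠ 0) (i : ℕ) (hi : i < a.natDegree) :
    (ρ a).coeff (Fintype.card Fq ^ (i + 1)) * X ^ (Fintype.card Fq ^ (i + 1))
        + (ρ a).coeff (Fintype.card Fq ^ i)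
      = X * (ρ a).coeff (Fintype.card Fq ^ (i + 1))
        + ((ρ a).coeff (Fintype.card Fq ^ i)) ^ (Fintype.card Fq) := by
  set q := Fintype.card Fq with hqdef
  set d := a.natDegree with hd
  set c : ℕ → Polynomial Fq := fun i => (ρ a).coeff (q ^ i) with hc
  have hrep := rho_rep ρ hρC hρT hρadd hρmul a ha
  have hcomm : (ρ a).comp (ρ X) = (ρ X).comp (ρ a) := by
    rw [← hρmul, ← hρmul, mul_comm]
  have e2 : ∀ j : ℕ, ((X : Polynomial (Polynomial Fq)) ^ q) ^ q ^ j = X ^ q ^ (j + 1) := by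
    intro j
    rw [← pow_mul, pow_succ, mul_comm (q ^ j) q]
  have hL : (ρ a).comp (ρ X)
      = (∑ j ∈ Finset.range (d + 1), C (c j * X ^ q ^ j) * X ^ q ^ j)
        + ∑ j ∈ Finset.range (d + 1), C (c j) * X ^ q ^ (j + 1) := by
    conv_lhs => rw [hrep]
    rw [my_sum_comp]
    have hterm : ∀ j ∈ Finset.range (d + 1),
        (C (c j) * X ^ q ^ j : Polynomial (Polynomial Fq)).comp (ρ X)
          = C (c j * X ^ q ^ j) * X ^ q ^ j + C (c j) * X ^ q ^ (j + 1) := by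
      intro j _
      rw [mul_comp, C_comp, X_pow_comp, hρT, add_pow_card_pow]
      have e1 : ((C (X : Polynomial Fq) * X : Polynomial (Polynomial Fq))) ^ q ^ j
          = C ((X : Polynomial Fq) ^ q ^ j) * X ^ q ^ j := by
        rw [mul_pow, ← C_pow]
      rw [e1, e2 j, mul_add, ← mul_assoc, ← C_mul]
    rw [Finset.sum_congr rfl hterm, Finset.sum_add_distrib]
  have hR : (ρ X).comp (ρ a)
      = (∑ j ∈ Finset.range (d + 1), C (X * c j) * X ^ q ^ j)
        + ∑ j ∈ Finset.range (d + 1), C (c j ^ q) * X ^ q ^ (j + 1) := by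
    rw [hρT, add_comp, mul_comp, C_comp, X_comp, X_pow_comp]
    conv_lhs => rw [hrep]
    congr 1
    · rw [Finset.mul_sum]
      refine Finset.sum_congr rfl fun j _ => ?_
      rw [← mul_assoc, ← C_mul]
    · rw [sum_pow_card2]
      refine Finset.sum_congr rfl fun j _ => ?_
      rw [mul_pow, ← C_pow, ← pow_mul, mul_comm (q ^ j) q, ← pow_succ']
  rw [hL, hR] at hcomm
  have hco := congrArg (fun P : Polynomial (Polynomial Fq) => P.coeff (q ^ (i + 1))) hcomm
  simp only [coeff_add] at hco
  rw [coeff_qpow_sumA (fun j => c j * X ^ q ^ j) (d + 1) (i + 1) (by omega),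
    coeff_qpow_sumB c (d + 1) i (by omega),
    coeff_qpow_sumA (fun j => X * c j) (d + 1) (i + 1) (by omega),
    coeff_qpow_sumB (fun j => c j ^ q) (d + 1) i (by omega)] at hco
  exact hco

omit hρC hρT hρadd hρmul

theorem not_dvd_X_pow_card_sub (π : Polynomial Fq) (hπmonic : π.Monic)
    (hπirr : Irreducible π) (i : ℕ) (h1 : 1 ≤ i) (h2 : i < π.natDegree) :
    ¬ π ∣ (X ^ (Fintype.card Fq ^ i) - X) := by
  classical
  intro hdvd
  haveI := Fact.mk hπirr
  obtain ⟨p, e, hp, he, hqpe, _, _, hcFq⟩ := char_pack (Fq := Fq)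
  haveI := hcFq
  haveI := Fact.mk hp
  set q := Fintype.card Fq with hqdef
  let F := AdjoinRoot π
  haveI : Fintype F := Module.fintypeOfFintype (AdjoinRoot.powerBasis' hπmonic).basis
  haveI : CharP F p := charP_of_injective_algebraMap
    (algebraMap Fq F).injective p
  have hcard : Fintype.card F = q ^ π.natDegree := by
    rw [Module.card_fintype (AdjoinRoot.powerBasis' hπmonic).basis]
    simp [AdjoinRoot.powerBasis']
    exact congrArg (q ^ ·) (Fintype.card_fin _)
  have ht : (AdjoinRoot.root π) ^ q ^ i = AdjoinRoot.root π := by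
    have h0 : AdjoinRoot.mk π (X ^ q ^ i - X) = 0 := AdjoinRoot.mk_eq_zero.mpr hdvd
    rw [map_sub, map_pow, AdjoinRoot.mk_X, sub_eq_zero] at h0
    exact h0
  have hall : ∀ x : F, x ^ q ^ i = x := by
    intro x
    obtain ⟨f, rfl⟩ := AdjoinRoot.mk_surjective x
    induction f using Polynomial.induction_on with
    | C c =>
        rw [← map_pow, ← C_pow, FiniteField.pow_card_pow]
    | add r s hr hs =>
        have hqi : Fintype.card Fq ^ i = p ^ (e * i) := by
          rw [← hqdef, hqpe, ← pow_mul]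
        rw [map_add, hqi, add_pow_char_pow, ← hqi, hr, hs]
    | monomial m co hco =>
        have : (C co * X ^ (m + 1) : Polynomial Fq) = C co * X ^ m * X := by ring
        rw [this, map_mul, mul_pow, hco, AdjoinRoot.mk_X, ht]
  set g : Polynomial F := X ^ q ^ i - X with hg
  have hq1 : 1 < q ^ i := Nat.one_lt_pow (by omega) (one_lt_q (Fq := Fq))
  have hgne : g ≠ 0 := by
    intro h
    have h2 := congrArg (fun p => Polynomial.coeff p (q ^ i)) h
    simp only [hg, coeff_sub, coeff_X_pow, coeff_X, if_pos rfl, coeff_zero] at h2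
    rw [if_neg (by omega : ¬ (1 : ℕ) = q ^ i)] at h2
    norm_num at h2
  have hle : Fintype.card F ≤ q ^ i := by
    have hsub : (Finset.univ : Finset F) ⊆ g.roots.toFinset := by
      intro x _
      rw [Multiset.mem_toFinset, mem_roots']
      refine ⟨hgne, ?_⟩
      simp [hg, IsRoot, hall x]
    calc Fintype.card F = (Finset.univ : Finset F).card := rfl
    _ ≤ g.roots.toFinset.card := Finset.card_le_card hsub
    _ ≤ Multiset.card g.roots := Multiset.toFinset_card_le _
    _ ≤ g.natDegree := card_roots' g
    _ ≤ q ^ i := by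
        refine le_trans (natDegree_sub_le _ _) ?_
        simp [natDegree_X_pow, natDegree_X]
        omega
  rw [hcard] at hle
  exact absurd hle (not_le.mpr (Nat.pow_lt_pow_right (one_lt_q (Fq := Fq)) h2))

include hρC hρT hρadd hρmul

theorem rho_pi_coeff_dvd (π : Polynomial Fq) (hπmonic : π.Monic) (hπirr : Irreducible π)
    (i : ℕ) (hi : i < π.natDegree) :
    π ∣ (ρ π).coeff (Fintype.card Fq ^ i) := by
  induction i with
  | zero =>
      rw [pow_zero, rho_coeff_one ρ hρC hρT hρadd hρmul]
  | succ i ih =>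
      have h1 : π ∣ (ρ π).coeff (Fintype.card Fq ^ i) := ih (by omega)
      have hrec := rho_rec ρ hρC hρT hρadd hρmul π hπmonic.ne_zero i (by omega)
      have heq : (ρ π).coeff (Fintype.card Fq ^ (i + 1)) * (X ^ (Fintype.card Fq ^ (i + 1)) - X)
          = (ρ π).coeff (Fintype.card Fq ^ i) ^ (Fintype.card Fq)
            - (ρ π).coeff (Fintype.card Fq ^ i) := by
        linear_combination hrec
      have hdvd2 : π ∣ (ρ π).coeff (Fintype.card Fq ^ i) ^ (Fintype.card Fq)
          - (ρ π).coeff (Fintype.card Fq ^ i) :=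
        dvd_sub (dvd_pow h1 (q_pos (Fq := Fq)).ne') h1
      rw [← heq] at hdvd2
      have hnot := not_dvd_X_pow_card_sub (Fq := Fq) π hπmonic hπirr (i + 1) (by omega) hi
      exact (hπirr.prime.2.2 _ _ hdvd2).resolve_right hnot

theorem rho_map_pi (π : Polynomial Fq) (hπmonic : π.Monic) (hπirr : Irreducible π) :
    (ρ π).map (AdjoinRoot.mk π) = X ^ (Fintype.card Fq ^ π.natDegree) := by
  refine Polynomial.ext fun j => ?_
  rw [coeff_map, coeff_X_pow]
  by_cases hj : j = Fintype.card Fq ^ π.natDegree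
  · rw [if_pos hj, hj]
    have hc1 : (ρ π).coeff (Fintype.card Fq ^ π.natDegree) = 1 := by
      have hd := rho_natDegree ρ hρC hρT hρadd hρmul π hπmonic.ne_zero
      have hlc := (rho_deg_lc ρ hρC hρT hρadd hρmul π hπmonic.ne_zero).2
      rw [← hd, ← Polynomial.leadingCoeff, hlc, hπmonic.leadingCoeff, map_one]
    rw [hc1, map_one]
  · rw [if_neg hj]
    by_cases hz : (ρ π).coeff j = 0
    · rw [hz, map_zero]
    obtain ⟨i, rfl⟩ := rho_support ρ hρC hρT hρadd hρmul π j hz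
    have hle : i ≤ π.natDegree := by
      have h1 := le_natDegree_of_ne_zero hz
      rw [rho_natDegree ρ hρC hρT hρadd hρmul π hπmonic.ne_zero] at h1
      exact (Nat.pow_le_pow_iff_right (one_lt_q (Fq := Fq))).mp h1
    have hlt : i < π.natDegree := by
      rcases lt_or_eq_of_le hle with h | h
      · exact h
      · exact absurd (by rw [h]) hj
    exact AdjoinRoot.mk_eq_zero.mpr (rho_pi_coeff_dvd ρ hρC hρT hρadd hρmul π hπmonic hπirr i hlt)

theorem rho_map_pi_pow (π : Polynomial Fq) (hπmonic : π.Monic) (hπirr : Irreducible π)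
    (m : ℕ) :
    (ρ (π ^ m)).map (AdjoinRoot.mk π) = X ^ (Fintype.card Fq ^ (π.natDegree * m)) := by
  induction m with
  | zero =>
      rw [pow_zero, rho_one ρ hρC hρT hρadd hρmul]
      simp
  | succ m ih =>
      have : π ^ (m + 1) = π * π ^ m := by ring
      rw [this, hρmul, Polynomial.map_comp, rho_map_pi ρ hρC hρT hρadd hρmul π hπmonic hπirr,
        ih, X_pow_comp, ← pow_mul, ← pow_add]
      congr 2

end Aux

/-- **Hayes' Lemma.** Let `A = 𝔽_q[T]` and let `ρ : A → A[X]` be the Carlitz module,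
determined by `ρ_c(X) = cX` for constants `c`, `ρ_T(X) = TX + X^q`, additivity, and
`ρ_{ab} = ρ_a ∘ ρ_b`.  For every monic irreducible `π` and every `n ≥ 1`, the polynomial
`ρ_{π^{n-1}}` divides `ρ_{π^n}` in `A[X]` and the quotient is a monic Eisenstein polynomial
at the prime `(π)`: all non-leading coefficients are divisible by `π` and the constant
term is not divisible by `π^2`. -/
theorem carlitz_quotient_eisenstein
    (Fq : Type) [Field Fq] [Fintype Fq]
    (ρ : Polynomial Fq → Polynomial (Polynomial Fq))
    (hρC : ∀ c : Fq, ρ (Polynomial.C c) = Polynomial.C (Polynomial.C c) * Polynomial.X)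
    (hρT : ρ Polynomial.X =
      Polynomial.C Polynomial.X * Polynomial.X + Polynomial.X ^ Fintype.card Fq)
    (hρadd : ∀ a b : Polynomial Fq, ρ (a + b) = ρ a + ρ b)
    (hρmul : ∀ a b : Polynomial Fq, ρ (a * b) = (ρ a).comp (ρ b))
    (π : Polynomial Fq) (hπmonic : π.Monic) (hπirr : Irreducible π)
    (n : ℕ) (hn : 1 ≤ n) :
    ∃ Q : Polynomial (Polynomial Fq),
      ρ (π ^ n) = ρ (π ^ (n - 1)) * Q ∧
      Q.Monic ∧
      (∀ i < Q.natDegree, π ∣ Q.coeff i) ∧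
      ¬ (π ^ 2 ∣ Q.coeff 0) := by
  classical
  haveI := Fact.mk hπirr
  set q := Fintype.card Fq with hq
  set d := π.natDegree with hd
  set m := n - 1 with hm
  have hπne : π ≠ 0 := hπmonic.ne_zero
  have hnm : π ^ n = π * π ^ m := by
    rw [hm, ← pow_succ']
    congr 1
    omega
  set Y := ρ (π ^ m) with hY
  have hXdvd : (Polynomial.X : Polynomial (Polynomial Fq)) ∣ ρ π :=
    Polynomial.X_dvd_iff.mpr (rho_coeff_zero ρ hρC hρT hρadd hρmul π)
  obtain ⟨g, hg⟩ := hXdvd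
  have hYmonic : Y.Monic := rho_monic ρ hρC hρT hρadd hρmul _ (hπmonic.pow m)
  have hπmne : π ^ m ≠ 0 := pow_ne_zero m hπne
  have hYdeg : Y.natDegree = q ^ (d * m) := by
    rw [hY, rho_natDegree ρ hρC hρT hρadd hρmul _ hπmne, Polynomial.natDegree_pow]
    rw [mul_comm]
  have hgmonic : g.Monic := by
    have h1 : (ρ π).leadingCoeff = 1 := rho_monic ρ hρC hρT hρadd hρmul π hπmonic
    rw [hg, Polynomial.leadingCoeff_mul, Polynomial.leadingCoeff_X, one_mul] at h1
    exact h1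
  have hYdne : Y.natDegree ≠ 0 := by
    rw [hYdeg]
    exact (pow_pos (q_pos (Fq := Fq)) _).ne'
  set Q := g.comp Y with hQ
  -- the division identity
  have hdivides : ρ (π ^ n) = Y * Q := by
    rw [hnm, hρmul, hg, Polynomial.mul_comp, Polynomial.X_comp]
  -- constant coefficient
  have hQ0 : Q.coeff 0 = π := by
    have hY0 : Y.coeff 0 = 0 := rho_coeff_zero ρ hρC hρT hρadd hρmul _
    have h1 : Q.coeff 0 = g.coeff 0 := by
      rw [Polynomial.coeff_zero_eq_eval_zero, hQ, Polynomial.eval_comp,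
        ← Polynomial.coeff_zero_eq_eval_zero, hY0, ← Polynomial.coeff_zero_eq_eval_zero]
    have h2 : g.coeff 0 = (ρ π).coeff 1 := by
      rw [hg, Polynomial.coeff_X_mul]
    rw [h1, h2, rho_coeff_one ρ hρC hρT hρadd hρmul]
  -- mod π computations
  have hmapg : g.map (AdjoinRoot.mk π) = Polynomial.X ^ (q ^ d - 1) := by
    have h1 := rho_map_pi ρ hρC hρT hρadd hρmul π hπmonic hπirr
    rw [hg, Polynomial.map_mul, Polynomial.map_X] at h1
    have hqd : 1 ≤ q ^ d := Nat.one_le_pow _ _ (q_pos (Fq := Fq))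
    have h2 : (Polynomial.X : Polynomial (AdjoinRoot π)) * Polynomial.X ^ (q ^ d - 1)
        = Polynomial.X ^ q ^ d := by
      rw [← pow_succ']
      congr 1
      omega
    exact mul_left_cancel₀ Polynomial.X_ne_zero (by rw [h1, h2])
  have hmapQ : Q.map (AdjoinRoot.mk π) = Polynomial.X ^ (q ^ (d * m) * (q ^ d - 1)) := by
    rw [hQ, Polynomial.map_comp, hmapg, hY,
      rho_map_pi_pow ρ hρC hρT hρadd hρmul π hπmonic hπirr m, Polynomial.X_pow_comp,
      ← pow_mul]
  have hQmonic : Q.Monic := hgmonic.comp hYmonic hYdne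
  have hQdeg : Q.natDegree = q ^ (d * m) * (q ^ d - 1) := by
    have := hQmonic.natDegree_map (AdjoinRoot.mk π)
    rw [hmapQ, Polynomial.natDegree_X_pow] at this
    exact this.symm
  refine ⟨Q, hdivides, hQmonic, ?_, ?_⟩
  · intro i hi
    have h1 : (AdjoinRoot.mk π) (Q.coeff i) = 0 := by
      have h2 := congrArg (fun p : Polynomial (AdjoinRoot π) => p.coeff i) hmapQ
      simp only [Polynomial.coeff_map, Polynomial.coeff_X_pow] at h2
      rw [h2, if_neg]
      rw [← hQdeg]
      omega
    exact AdjoinRoot.mk_eq_zero.mp h1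
  · rw [hQ0]
    intro hdvd
    have h1 : π * π ∣ π * 1 := by
      rw [mul_one, ← sq]
      exact hdvd
    exact hπirr.not_isUnit (isUnit_of_dvd_one (mul_dvd_mul_iff_left hπne |>.mp h1))
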